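/- Let p be a prime, k a field of characteristic p, γ ∈ k a root of unity of order q, and g(ζ) = γζ + ... a power series in k[[ζ]]. Then for every integer n ≥ 0, i_n(g^q) := ord((g^{q p^n}(ζ) − ζ)/ζ) satisfies i_n(g^q) ≥ q·(p^{n+1} − 1)/(p − 1). -/

import Mathlib

open PowerSeries Finset

/-- Formal composition `f ∘ g` of power series (correct when `g` has zero constant term). -/
noncomputable def fcomp {k : Type*} [CommRing k] (f g : PowerSeries k) : PowerSeries k :=
  PowerSeries.mk fun n =>
    ∑ m ∈ Finset.range (n + 1), (PowerSeries.coeff m f) * (PowerSeries.coeff n (g ^ m))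

/-- `m`-th iterate of a power series with zero constant term. -/
noncomputable def fit {k : Type*} [CommRing k] (g : PowerSeries k) : ℕ → PowerSeries k
  | 0 => PowerSeries.X
  | n + 1 => fcomp g (fit g n)

namespace Aux10

variable {k : Type*} [CommRing k]

theorem coeff_fcomp (n : ℕ) (f g : k⟦X⟧) :
    coeff n (fcomp f g) = ∑ m ∈ range (n + 1), coeff m f * coeff n (g ^ m) := by
  simp [fcomp]

theorem coeff_pow_eq_zero' {v : k⟦X⟧} {e : ℕ} (hv : ∀ t < e, coeff t v = 0)
    {n m : ℕ} (h : n < m * e) : coeff n (v ^ m) = 0 := by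
  have h1 : (X : k⟦X⟧) ^ e ∣ v := X_pow_dvd_iff.mpr hv
  have h2 : (X : k⟦X⟧) ^ (m * e) ∣ v ^ m := by
    rw [mul_comm, pow_mul]
    exact pow_dvd_pow_of_dvd h1 m
  exact X_pow_dvd_iff.mp h2 n h

theorem coeff_pow_eq_zero {g : k⟦X⟧} (hg : constantCoeff g = 0)
    {n m : ℕ} (h : n < m) : coeff n (g ^ m) = 0 := by
  refine coeff_pow_eq_zero' (e := 1) (fun t ht => ?_) (by omega)
  interval_cases t
  simpa using hg

theorem coeff_fcomp_of_lt {g : k⟦X⟧} (hg : constantCoeff g = 0) (f : k⟦X⟧)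
    {n M : ℕ} (hM : n < M) :
    coeff n (fcomp f g) = ∑ m ∈ range M, coeff m f * coeff n (g ^ m) := by
  rw [coeff_fcomp]
  refine Finset.sum_subset (by intro x hx; simp at *; omega) ?_
  intro x hx hx'
  simp only [mem_range] at hx hx'
  rw [coeff_pow_eq_zero hg (by omega), mul_zero]

theorem fcomp_add (f₁ f₂ g : k⟦X⟧) : fcomp (f₁ + f₂) g = fcomp f₁ g + fcomp f₂ g := by
  ext n
  simp [coeff_fcomp, add_mul, Finset.sum_add_distrib]

theorem fcomp_sub (f₁ f₂ g : k⟦X⟧) : fcomp (f₁ - f₂) g = fcomp f₁ g - fcomp f₂ g := by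
  ext n
  simp [coeff_fcomp, sub_mul, Finset.sum_sub_distrib]

theorem fcomp_X {g : k⟦X⟧} (hg : constantCoeff g = 0) : fcomp X g = g := by
  ext n
  rw [coeff_fcomp_of_lt hg _ (show n < n + 2 by omega)]
  rw [Finset.sum_eq_single 1]
  · simp
  · intro m _ hm1
    rw [coeff_X, if_neg hm1, zero_mul]
  · intro h; simp at h

theorem fcomp_one (g : k⟦X⟧) : fcomp 1 g = 1 := by
  ext n
  rw [coeff_fcomp, Finset.sum_eq_single 0]
  · simp
  · intro m _ hm0
    rw [coeff_one, if_neg hm0, zero_mul]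
  · simp

theorem constantCoeff_fcomp (f g : k⟦X⟧) :
    constantCoeff (fcomp f g) = constantCoeff f := by
  have := coeff_fcomp (k := k) 0 f g
  simpa using this

theorem coeff_one_fcomp (f g : k⟦X⟧) :
    coeff 1 (fcomp f g) = coeff 1 f * coeff 1 g := by
  rw [coeff_fcomp]
  rw [show (1:ℕ) + 1 = 2 from rfl, Finset.sum_range_succ, Finset.sum_range_one]
  simp

theorem coeff_eval₂_eq_zero {g : k⟦X⟧} (hg : constantCoeff g = 0) {P : Polynomial k}
    {n : ℕ} (hP : ∀ m ≤ n, P.coeff m = 0) :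
    coeff n (P.eval₂ C g) = 0 := by
  rw [Polynomial.eval₂_eq_sum, Polynomial.sum, map_sum]
  refine Finset.sum_eq_zero fun m _ => ?_
  rcases le_or_gt m n with h | h
  · rw [hP m h]; simp
  · rw [coeff_C_mul, coeff_pow_eq_zero hg h, mul_zero]

theorem coeff_fcomp_eval₂ {g : k⟦X⟧} (hg : constantCoeff g = 0) (f : k⟦X⟧)
    {n M : ℕ} (hM : n < M) :
    coeff n (fcomp f g) = coeff n ((trunc M f).eval₂ C g) := by
  have hd : (trunc M f).natDegree < M := by
    rcases eq_or_ne (trunc M f) 0 with h | h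
    · simp [h]; omega
    · exact (Polynomial.natDegree_lt_iff_degree_lt h).mpr (degree_trunc_lt f M)
  rw [Polynomial.eval₂_eq_sum_range' _ hd, map_sum, coeff_fcomp_of_lt hg f hM]
  refine Finset.sum_congr rfl fun m hm => ?_
  rw [coeff_trunc, if_pos (mem_range.mp hm), coeff_C_mul]

theorem fcomp_mul {g : k⟦X⟧} (hg : constantCoeff g = 0) (a b : k⟦X⟧) :
    fcomp (a * b) g = fcomp a g * fcomp b g := by
  ext n
  rw [coeff_fcomp_eval₂ hg _ (Nat.lt_succ_self n)]
  have key : ∀ m ≤ n, (trunc (n+1) (a*b) - trunc (n+1) a * trunc (n+1) b).coeff m = 0 := by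
    intro m hm
    rw [Polynomial.coeff_sub, Polynomial.coeff_mul, coeff_trunc, if_pos (by omega),
      PowerSeries.coeff_mul]
    rw [sub_eq_zero]
    refine Finset.sum_congr rfl fun x hx => ?_
    rw [Finset.HasAntidiagonal.mem_antidiagonal] at hx
    rw [coeff_trunc, coeff_trunc, if_pos (by omega), if_pos (by omega)]
  have h2 := coeff_eval₂_eq_zero hg (n := n) key
  rw [Polynomial.eval₂_sub, Polynomial.eval₂_mul, map_sub, sub_eq_zero] at h2
  rw [h2, PowerSeries.coeff_mul, PowerSeries.coeff_mul]
  refine Finset.sum_congr rfl fun x hx => ?_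
  rw [Finset.HasAntidiagonal.mem_antidiagonal] at hx
  rw [← coeff_fcomp_eval₂ hg a (show x.1 < n+1 by omega),
    ← coeff_fcomp_eval₂ hg b (show x.2 < n+1 by omega)]



theorem fcomp_pow {g : k⟦X⟧} (hg : constantCoeff g = 0) (a : k⟦X⟧) (t : ℕ) :
    fcomp (a ^ t) g = (fcomp a g) ^ t := by
  induction t with
  | zero => simpa using fcomp_one g
  | succ t ih => rw [pow_succ, pow_succ, fcomp_mul hg, ih]

theorem fcomp_assoc (a : k⟦X⟧) {b c : k⟦X⟧} (hb : constantCoeff b = 0)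
    (hc : constantCoeff c = 0) :
    fcomp (fcomp a b) c = fcomp a (fcomp b c) := by
  have hbc : constantCoeff (fcomp b c) = 0 := by
    rw [constantCoeff_fcomp, hb]
  ext n
  rw [coeff_fcomp n (fcomp a b) c, coeff_fcomp n a (fcomp b c)]
  have h1 : ∀ m, (fcomp b c) ^ m = fcomp (b ^ m) c := fun m => (fcomp_pow hc b m).symm
  calc ∑ m ∈ range (n+1), coeff m (fcomp a b) * coeff n (c ^ m)
      = ∑ m ∈ range (n+1), (∑ t ∈ range (n+1), coeff t a * coeff m (b ^ t)) * coeff n (c ^ m) := by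
        refine Finset.sum_congr rfl fun m hm => ?_
        rw [coeff_fcomp_of_lt hb a (show m < n + 1 from mem_range.mp hm)]
    _ = ∑ t ∈ range (n+1), coeff t a * ∑ m ∈ range (n+1), coeff m (b ^ t) * coeff n (c ^ m) := by
        simp only [Finset.sum_mul]
        rw [Finset.sum_comm]
        refine Finset.sum_congr rfl fun t _ => ?_
        rw [Finset.mul_sum]
        refine Finset.sum_congr rfl fun m _ => by ring
    _ = ∑ t ∈ range (n+1), coeff t a * coeff n ((fcomp b c) ^ t) := by
        refine Finset.sum_congr rfl fun t _ => ?_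
        rw [h1 t, coeff_fcomp_of_lt hc (b ^ t) (Nat.lt_succ_self n)]



section fit

theorem fit_zero (g : k⟦X⟧) : fit g 0 = X := rfl

theorem fit_succ (g : k⟦X⟧) (n : ℕ) : fit g (n + 1) = fcomp g (fit g n) := rfl

theorem constantCoeff_fit {g : k⟦X⟧} (hg : constantCoeff g = 0) (n : ℕ) :
    constantCoeff (fit g n) = 0 := by
  induction n with
  | zero => simp [fit_zero]
  | succ n ih => rw [fit_succ, constantCoeff_fcomp, hg]

theorem coeff_one_fit (g : k⟦X⟧) (n : ℕ) :
    coeff 1 (fit g n) = (coeff 1 g) ^ n := by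
  induction n with
  | zero => simp [fit_zero]
  | succ n ih => rw [fit_succ, coeff_one_fcomp, ih, pow_succ]; ring

theorem fcomp_X_left (f : k⟦X⟧) : fcomp f X = f := by
  ext n
  rw [coeff_fcomp]
  rw [Finset.sum_eq_single n]
  · rw [coeff_X_pow, if_pos rfl, mul_one]
  · intro m _ hmn
    rw [coeff_X_pow, if_neg (fun h => hmn h.symm), mul_zero]
  · intro h; simp at h

theorem fit_one (g : k⟦X⟧) : fit g 1 = g := by
  rw [fit_succ, fit_zero, fcomp_X_left]

theorem fit_X (n : ℕ) : fit (X : k⟦X⟧) n = X := by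
  induction n with
  | zero => rfl
  | succ n ih => rw [fit_succ, ih, fcomp_X (by simp)]

theorem fit_add {g : k⟦X⟧} (hg : constantCoeff g = 0) (m n : ℕ) :
    fit g (m + n) = fcomp (fit g m) (fit g n) := by
  induction m with
  | zero => rw [fit_zero, zero_add, fcomp_X (constantCoeff_fit hg n)]
  | succ m ih =>
      have : m + 1 + n = (m + n) + 1 := by omega
      rw [this, fit_succ, ih, fit_succ,
        fcomp_assoc g (constantCoeff_fit hg m) (constantCoeff_fit hg n)]

theorem fit_succ' {g : k⟦X⟧} (hg : constantCoeff g = 0) (n : ℕ) :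
    fit g (n + 1) = fcomp (fit g n) g := by
  rw [fit_add hg n 1, fit_one]

theorem fit_mul {g : k⟦X⟧} (hg : constantCoeff g = 0) (m n : ℕ) :
    fit g (m * n) = fit (fit g m) n := by
  induction n with
  | zero => rfl
  | succ n ih =>
      have : m * (n + 1) = m + m * n := by ring
      rw [this, fit_add hg, ih, fit_succ]

end fit

section selfpow

theorem coeff_self_pow {g : k⟦X⟧} (hg : constantCoeff g = 0) (m : ℕ) :
    coeff m (g ^ m) = (coeff 1 g) ^ m := by
  induction m with
  | zero => simp
  | succ m ih =>
      rw [pow_succ, PowerSeries.coeff_mul, Finset.sum_eq_single (m, 1)]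
      · rw [ih, pow_succ]
      · rintro ⟨i, j⟩ h1 h2
        rw [Finset.HasAntidiagonal.mem_antidiagonal] at h1
        rcases lt_or_ge i m with h | h
        · rw [coeff_pow_eq_zero hg h, zero_mul]
        · have hj1 : j = 0 ∨ j = 1 := by omega
          rcases hj1 with rfl | rfl
          · have : (constantCoeff) g = coeff 0 g := by simp
            rw [show (coeff 0) g = 0 by rw [← this, hg], mul_zero]
          · exfalso; exact h2 (by simp [show i = m by omega])
      · intro h; exfalso; exact h (by simp [Finset.HasAntidiagonal.mem_antidiagonal])

end selfpow


section addpow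

theorem coeff_pow_term_eq_zero {v : k⟦X⟧} {e : ℕ} (hv : ∀ t < e, coeff t v = 0)
    (he : 1 ≤ e) {m r n : ℕ} (hrm : r < m) (hn : n < m + (m - r) * (e - 1)) (c : ℕ) :
    coeff n ((X : k⟦X⟧) ^ r * v ^ (m - r) * (c : k⟦X⟧)) = 0 := by
  set s := m - r with hs
  have hs1 : 1 ≤ s := by omega
  have h2 : s * e = s * (e - 1) + s := by
    conv_lhs => rw [show e = (e - 1) + 1 by omega]
    ring
  rw [mul_comm, ← map_natCast C c, ← mul_assoc, mul_comm (C (c:k)) _, mul_assoc,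
    coeff_X_pow_mul']
  split_ifs with h
  · rw [coeff_C_mul, coeff_pow_eq_zero' hv (show n - r < s * e by omega), mul_zero]
  · rfl


theorem coeff_add_pow_lt {v : k⟦X⟧} {e : ℕ} (he : 2 ≤ e) (hv : ∀ t < e, coeff t v = 0)
    {m n : ℕ} (hn : n < m + (e - 1)) :
    coeff n ((X + v) ^ m) = coeff n ((X : k⟦X⟧) ^ m) := by
  rw [add_pow, map_sum, Finset.sum_eq_single m]
  · simp
  · intro r hr hrm
    rw [Finset.mem_range] at hr
    have hrm' : r < m := by omega
    have h1 : e - 1 ≤ (m - r) * (e - 1) := Nat.le_mul_of_pos_left _ (by omega)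
    exact coeff_pow_term_eq_zero hv (by omega) hrm' (by omega) _
  · intro h; simp at h

theorem coeff_add_pow_eq {v : k⟦X⟧} {e : ℕ} (he : 2 ≤ e) (hv : ∀ t < e, coeff t v = 0)
    (m : ℕ) :
    coeff (m + (e - 1)) ((X + v) ^ m) =
      coeff (m + (e - 1)) ((X : k⟦X⟧) ^ m) + (m : k) * coeff e v := by
  rcases m with _ | m'
  · simp
  set m := m' + 1 with hm
  set n := m + (e - 1) with hndef
  rw [add_pow, map_sum, Finset.sum_range_succ, Finset.sum_range_succ]
  have hzero : ∑ r ∈ Finset.range m', coeff n ((X:k⟦X⟧) ^ r * v ^ (m - r) * (m.choose r : k⟦X⟧)) = 0 := by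
    refine Finset.sum_eq_zero fun r hr => ?_
    rw [Finset.mem_range] at hr
    have h1 : 2 * (e - 1) ≤ (m - r) * (e - 1) := Nat.mul_le_mul_right _ (by omega)
    exact coeff_pow_term_eq_zero hv (by omega) (by omega) (by omega) _
  rw [hzero, zero_add]
  have hm' : coeff n ((X:k⟦X⟧) ^ m' * v ^ (m - m') * (m.choose m' : k⟦X⟧)) = (m : k) * coeff e v := by
    have hch : m.choose m' = m := by
      rw [show m' = m - 1 by omega, Nat.choose_symm (by omega)]
      exact Nat.choose_one_right m
    rw [show m - m' = 1 by omega, pow_one, hch, mul_comm, ← map_natCast C m,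
      ← mul_assoc, mul_comm (C (m:k)) _, mul_assoc, coeff_X_pow_mul',
      if_pos (show m' ≤ n by omega), coeff_C_mul,
      show n - m' = e by omega]
  rw [hm']
  simp [add_comm]

end addpow


section comm

theorem key_comm {g : k⟦X⟧} (hg0 : constantCoeff g = 0) (N : ℕ) {i : ℕ} (hi1 : 1 ≤ i)
    (hlow : ∀ t < i + 1, coeff t (fit g N - X) = 0) :
    coeff 1 g * coeff (i+1) (fit g N - X)
      = coeff (i+1) (fit g N - X) * (coeff 1 g) ^ (i+1) := by
  set F := fit g N with hF
  set v := F - X with hv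
  set c := coeff (i+1) v with hc
  have hF0 : constantCoeff F = 0 := constantCoeff_fit hg0 N
  have hFX : F = X + v := by rw [hv]; ring
  have hv0 : constantCoeff v = 0 := by
    have := hlow 0 (by omega)
    simpa using this
  have hcomm : fcomp g F = fcomp F g := by
    rw [hF, ← fit_succ, fit_succ' hg0]
  -- left side
  have hL : coeff (i+1) (fcomp g F) = coeff 1 g * c + coeff (i+1) g := by
    rw [coeff_fcomp]
    have hterm : ∀ m ∈ Finset.range (i + 1 + 1),
        coeff m g * coeff (i+1) (F ^ m)
          = coeff m g * (coeff (i+1) ((X:k⟦X⟧) ^ m) + if m = 1 then c else 0) := by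
      intro m hm
      rw [Finset.mem_range] at hm
      congr 1
      rcases Nat.lt_or_ge m 2 with h2 | h2
      · interval_cases m
        · simp
        · simp only [if_pos rfl, pow_one, pow_one]
          rw [hFX, map_add, coeff_X]
          simp [hc]
      · rw [if_neg (by omega), add_zero, hFX,
          coeff_add_pow_lt (by omega : 2 ≤ i + 1) (fun t ht => hlow t ht) (by omega)]
    rw [Finset.sum_congr rfl hterm]
    simp only [mul_add, Finset.sum_add_distrib]
    have h1 : ∑ m ∈ Finset.range (i+1+1), coeff m g * coeff (i+1) ((X:k⟦X⟧) ^ m)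
        = coeff (i+1) g := by
      rw [Finset.sum_eq_single (i+1)]
      · rw [coeff_X_pow, if_pos rfl, mul_one]
      · intro m _ hm; rw [coeff_X_pow, if_neg (fun h => hm (by omega)), mul_zero]
      · intro h; simp at h
    have h2 : ∑ m ∈ Finset.range (i+1+1), coeff m g * (if m = 1 then c else 0)
        = coeff 1 g * c := by
      rw [Finset.sum_eq_single 1]
      · simp
      · intro m _ hm; rw [if_neg hm, mul_zero]
      · intro h; simp at h
    rw [h1, h2]; ring
  -- right side
  have hR : coeff (i+1) (fcomp F g) = coeff (i+1) g + c * (coeff 1 g) ^ (i+1) := by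
    rw [hFX, fcomp_add, fcomp_X hg0, map_add]
    congr 1
    rw [coeff_fcomp, Finset.sum_eq_single (i+1)]
    · rw [coeff_self_pow hg0, hc]
    · intro m hm hmne
      rw [Finset.mem_range] at hm
      rw [hlow m (by omega), zero_mul]
    · intro h; simp at h
  have := hcomm
  apply_fun coeff (i+1) at this
  rw [hL, hR] at this
  linear_combination this

end comm


section delta

noncomputable def delta (u : k⟦X⟧) : k⟦X⟧ → k⟦X⟧ := fun w => fcomp w (X + u) - w

theorem constantCoeff_Xu {u : k⟦X⟧} (hu0 : constantCoeff u = 0) :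
    constantCoeff (X + u : k⟦X⟧) = 0 := by simp [hu0]

theorem telescope {u : k⟦X⟧} (hu0 : constantCoeff u = 0) (p : ℕ) :
    fit (X + u) p - X = ∑ j ∈ Finset.range p, fcomp u (fit (X + u) j) := by
  have hf0 := constantCoeff_Xu hu0
  have hstep : ∀ j, fit (X + u) (j + 1) - fit (X + u) j = fcomp u (fit (X + u) j) := by
    intro j
    rw [fit_succ, fcomp_add, fcomp_X (constantCoeff_fit hf0 j)]
    ring
  calc fit (X + u) p - X = fit (X + u) p - fit (X + u) 0 := by rw [fit_zero]
    _ = ∑ j ∈ Finset.range p, (fit (X + u) (j+1) - fit (X + u) j) := (Finset.sum_range_sub _ p).symm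
    _ = ∑ j ∈ Finset.range p, fcomp u (fit (X + u) j) := Finset.sum_congr rfl fun j _ => hstep j

theorem binom_comp {u : k⟦X⟧} (hu0 : constantCoeff u = 0) (j : ℕ) (h : k⟦X⟧) :
    fcomp h (fit (X + u) j) = ∑ r ∈ Finset.range (j + 1), (j.choose r) • (delta u)^[r] h := by
  have hf0 := constantCoeff_Xu hu0
  set D : AddMonoid.End (k⟦X⟧) := AddMonoidHom.mk' (fun w => fcomp w (X + u) - w)
    (by intro a b; show fcomp (a + b) (X + u) - (a + b) = _; rw [fcomp_add]; ring) with hD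
  have hDapp : ∀ w : k⟦X⟧, D w = delta u w := fun w => rfl
  have hDiter : ∀ (r : ℕ) (w : k⟦X⟧), (D ^ r) w = (delta u)^[r] w := fun r w => rfl
  have hpow : ∀ (w : k⟦X⟧), ((D + 1) ^ j) w = fcomp w (fit (X + u) j) := by
    induction j with
    | zero => intro w; simp [fit_zero, fcomp_X_left]
    | succ j ih =>
        intro w
        rw [pow_succ]
        have hmul : ((D + 1) ^ j * (D + 1)) w = ((D + 1) ^ j) ((D + 1) w) := rfl
        rw [hmul]
        have h1 : (D + 1) w = fcomp w (X + u) := by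
          show (D w) + w = _
          rw [hDapp]
          show fcomp w (X + u) - w + w = _
          ring
        rw [h1, ih, fit_succ, ← fcomp_assoc w hf0 (constantCoeff_fit hf0 j)]
  have h2 : ((D + 1) ^ j) h = ∑ r ∈ Finset.range (j + 1), (j.choose r) • (delta u)^[r] h := by
    rw [Commute.add_pow (Commute.one_right D) j]
    erw [AddMonoidHom.finset_sum_apply]
    refine Finset.sum_congr rfl fun r hr => ?_
    rw [one_pow, mul_one]
    have : (D ^ r * ((j.choose r : ℕ) : AddMonoid.End (k⟦X⟧))) h
        = (D ^ r) ((j.choose r : ℕ) • h) := rfl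
    erw [this]
    rw [map_nsmul, hDiter]
  rw [← hpow h, h2]


theorem nsmul_eq_zero_of_dvd {p c : ℕ} [CharP k p] (h : p ∣ c) (x : k⟦X⟧) : c • x = 0 := by
  ext n
  rw [map_nsmul, nsmul_eq_mul, (CharP.cast_eq_zero_iff k p c).mpr h, zero_mul, map_zero]

theorem fit_p_eq_delta_iter {p : ℕ} (hp : p.Prime) [CharP k p] {u : k⟦X⟧}
    (hu0 : constantCoeff u = 0) :
    fit (X + u) p - X = (delta u)^[p - 1] u := by
  have hp1 : 1 ≤ p := hp.pos
  rw [telescope hu0 p]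
  have h1 : ∀ j ∈ Finset.range p,
      fcomp u (fit (X + u) j) = ∑ r ∈ Finset.range p, (j.choose r) • (delta u)^[r] u := by
    intro j hj
    rw [Finset.mem_range] at hj
    rw [binom_comp hu0 j u]
    refine Finset.sum_subset (Finset.range_subset_range.mpr (by omega)) fun r hr hr' => ?_
    rw [Finset.mem_range] at hr
    simp only [Finset.mem_range, not_lt] at hr'
    rw [Nat.choose_eq_zero_of_lt (by omega), zero_smul]
  rw [Finset.sum_congr rfl h1, Finset.sum_comm]
  have h3 : ∀ r ∈ Finset.range p,
      (∑ j ∈ Finset.range p, (j.choose r) • (delta u)^[r] u)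
        = (p.choose (r+1)) • (delta u)^[r] u := by
    intro r hr
    rw [Finset.mem_range] at hr
    rw [← Finset.sum_smul]
    congr 1
    have hsub : Finset.Icc r (p-1) ⊆ Finset.range p := by
      intro j hj
      rw [Finset.mem_Icc] at hj
      rw [Finset.mem_range]
      omega
    rw [← Finset.sum_subset hsub (fun j hjr hj => ?_), Nat.sum_Icc_choose,
      show p - 1 + 1 = p by omega]
    rw [Finset.mem_range] at hjr
    rw [Finset.mem_Icc] at hj
    exact Nat.choose_eq_zero_of_lt (by omega)
  rw [Finset.sum_congr rfl h3, Finset.sum_eq_single (p-1)]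
  · rw [show p - 1 + 1 = p by omega, Nat.choose_self, one_smul]
  · intro r hr hrne
    rw [Finset.mem_range] at hr
    refine nsmul_eq_zero_of_dvd (Nat.Prime.dvd_choose_self hp (by omega) (by omega)) _
  · intro h
    exfalso
    exact h (Finset.mem_range.mpr (by omega))

end delta


section deltacoeff

variable {u : k⟦X⟧} {e : ℕ}

theorem delta_coeff_lt (he : 2 ≤ e) (hu : ∀ t < e, coeff t u = 0)
    {h : k⟦X⟧} {s : ℕ} (hh : ∀ t < s, coeff t h = 0)
    {nn : ℕ} (hnn : nn < s + (e - 1)) :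
    coeff nn (delta u h) = 0 := by
  have hu0 : constantCoeff u = 0 := by
    have := hu 0 (by omega); simpa using this
  show coeff nn (fcomp h (X + u) - h) = 0
  rw [map_sub, coeff_fcomp, Finset.sum_eq_single nn, sub_eq_zero]
  · rcases Nat.lt_or_ge nn s with hlt | hge
    · rw [hh nn hlt]; simp
    · rw [coeff_add_pow_lt he hu (by omega), coeff_X_pow, if_pos rfl, mul_one]
  · intro m hm hmne
    rw [Finset.mem_range] at hm
    rcases Nat.lt_or_ge m s with hlt | hge
    · rw [hh m hlt, zero_mul]
    · rw [coeff_add_pow_lt he hu (by omega), coeff_X_pow, if_neg (fun hh' => hmne hh'.symm),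
        mul_zero]
  · intro hmem; exfalso; exact hmem (Finset.mem_range.mpr (by omega))

theorem delta_coeff_eq (he : 2 ≤ e) (hu : ∀ t < e, coeff t u = 0)
    {h : k⟦X⟧} {s : ℕ} (hh : ∀ t < s, coeff t h = 0) :
    coeff (s + (e - 1)) (delta u h) = (s : k) * coeff s h * coeff e u := by
  have hu0 : constantCoeff u = 0 := by
    have := hu 0 (by omega); simpa using this
  set n := s + (e - 1) with hn
  have hsn : s < n := by omega
  show coeff n (fcomp h (X + u) - h) = _
  rw [map_sub, coeff_fcomp]
  have hsplit : ∑ m ∈ Finset.range (n + 1), coeff m h * coeff n ((X + u) ^ m)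
      = ∑ m ∈ ({s, n} : Finset ℕ), coeff m h * coeff n ((X + u) ^ m) := by
    refine (Finset.sum_subset (fun m hm => ?_) (fun m hm hm' => ?_)).symm
    · rw [Finset.mem_insert, Finset.mem_singleton] at hm
      rw [Finset.mem_range]
      omega
    · rw [Finset.mem_insert, Finset.mem_singleton] at hm'
      push_neg at hm'
      rw [Finset.mem_range] at hm
      rcases Nat.lt_or_ge m s with hlt | hge
      · rw [hh m hlt, zero_mul]
      · rw [coeff_add_pow_lt he hu (by omega), coeff_X_pow, if_neg (fun hh' => hm'.2 hh'.symm),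
          mul_zero]
  rw [hsplit, Finset.sum_pair (by omega : s ≠ n)]
  have h1 : coeff n ((X + u) ^ s) = (s : k) * coeff e u := by
    rw [hn, coeff_add_pow_eq he hu s, coeff_X_pow, if_neg (by omega), zero_add]
  have h2 : coeff n ((X + u) ^ n) = 1 := by
    rw [coeff_add_pow_lt he hu (by omega), coeff_X_pow, if_pos rfl]
  rw [h1, h2, mul_one]
  ring

theorem delta_iter_coeff (he : 2 ≤ e) (hu : ∀ t < e, coeff t u = 0) (r : ℕ) :
    (∀ t < e + r * (e - 1), coeff t ((delta u)^[r] u) = 0) ∧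
      coeff (e + r * (e - 1)) ((delta u)^[r] u)
        = (∏ j ∈ Finset.range r, ((e + j * (e - 1) : ℕ) : k)) * (coeff e u) ^ (r + 1) := by
  induction r with
  | zero =>
      refine ⟨fun t ht => hu t (by omega), ?_⟩
      simp
  | succ r ih =>
      have hs : e + r * (e - 1) + (e - 1) = e + (r + 1) * (e - 1) := by ring
      constructor
      · intro t ht
        rw [Function.iterate_succ_apply']
        exact delta_coeff_lt he hu ih.1 (by omega)
      · rw [Function.iterate_succ_apply', ← hs, delta_coeff_eq he hu ih.1, ih.2,
          Finset.prod_range_succ]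
        push_cast
        ring

end deltacoeff


theorem exists_zero_factor {p b : ℕ} (hp : p.Prime) (hb : ¬ p ∣ b) :
    ∃ j < p - 1, p ∣ ((b + 1) + j * b) := by
  haveI : Fact p.Prime := ⟨hp⟩
  haveI : NeZero p := ⟨hp.pos.ne'⟩
  have hc : (b : ZMod p) ≠ 0 := fun h => hb ((ZMod.natCast_eq_zero_iff b p).mp h)
  set z : ZMod p := -(b : ZMod p)⁻¹ with hz
  have hz0 : z ≠ 0 := neg_ne_zero.mpr (inv_ne_zero hc)
  set v := z.val with hv
  have hvp : v < p := ZMod.val_lt z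
  have hv0 : v ≠ 0 := fun h => hz0 (by rwa [ZMod.val_eq_zero] at h)
  refine ⟨v - 1, by omega, ?_⟩
  have hvz : ((v : ℕ) : ZMod p) = z := by rw [hv, ZMod.natCast_val, ZMod.cast_id]
  have key : ((b + 1 + (v - 1) * b : ℕ) : ZMod p) = 0 := by
    push_cast [Nat.cast_sub (show 1 ≤ v by omega)]
    rw [hvz]
    have h2 : z * b = -1 := by rw [hz, neg_mul, inv_mul_cancel₀ hc]
    linear_combination h2
  exact (ZMod.natCast_eq_zero_iff _ p).mp key

theorem main_est {p : ℕ} (hp : p.Prime) [CharP k p] {u : k⟦X⟧} {e : ℕ}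
    (he : 2 ≤ e) (hu : ∀ t < e, coeff t u = 0) :
    (∀ t < e + (p - 1) * (e - 1), coeff t (fit (X + u) p - X) = 0) ∧
      (¬ (p ∣ (e - 1)) → coeff (e + (p - 1) * (e - 1)) (fit (X + u) p - X) = 0) := by
  have hu0 : constantCoeff u = 0 := by
    have := hu 0 (by omega); simpa using this
  rw [fit_p_eq_delta_iter hp hu0]
  obtain ⟨ha, hb⟩ := delta_iter_coeff he hu (p - 1)
  refine ⟨ha, fun hnd => ?_⟩
  rw [hb]
  obtain ⟨j, hj, hdvd⟩ := exists_zero_factor hp hnd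
  have hjdvd : p ∣ (e + j * (e - 1)) := by
    have : e + j * (e - 1) = ((e - 1) + 1) + j * (e - 1) := by omega
    rwa [this]
  rw [Finset.prod_eq_zero (f := fun j => ((e + j * (e - 1) : ℕ) : k))
    (Finset.mem_range.mpr hj)
    ((CharP.cast_eq_zero_iff k p (e + j * (e - 1))).mpr hjdvd), zero_mul]

end Aux10

open Aux10 in
/-- For every `n ≥ 0`, `i_n(g^q) = ord((g^{q p^n}(ζ) - ζ)/ζ) ≥ q·(p^{n+1} - 1)/(p - 1)
= q·(1 + p + ⋯ + p^n)` (the infinite case being trivial). -/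
theorem stmt10 {k : Type*} [Field k] (p : ℕ) (hp : p.Prime) [CharP k p]
    (γ : k) (q : ℕ) (hq0 : 0 < q) (hγq : γ ^ q = 1)
    (hqmin : ∀ j, 0 < j → j < q → γ ^ j ≠ 1)
    (g : PowerSeries k) (hg0 : PowerSeries.constantCoeff g = 0)
    (hg1 : PowerSeries.coeff 1 g = γ)
    (n : ℕ) (i : ℕ)
    (hi : PowerSeries.order (fit g (q * p ^ n) - PowerSeries.X) = ((i + 1 : ℕ) : ℕ∞)) :
    q * ∑ j ∈ Finset.range (n + 1), p ^ j ≤ i := by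
  classical
  haveI : Fact p.Prime := ⟨hp⟩
  have hp2 : 2 ≤ p := hp.two_le
  have hγ0 : γ ≠ 0 := by
    intro h
    rw [h, zero_pow hq0.ne'] at hγq
    exact zero_ne_one hγq
  have hpq : ¬ p ∣ q := by
    rintro ⟨t, rfl⟩
    have ht0 : 0 < t := by
      rcases Nat.eq_zero_or_pos t with rfl | h
      · simp at hq0
      · exact h
    have h1 : (γ ^ t) ^ p = 1 := by rw [← pow_mul, mul_comm]; exact hγq
    have h2 : (γ ^ t - 1) ^ p = 0 := by rw [sub_pow_char, h1, one_pow, sub_self]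
    have h3 : γ ^ t = 1 := by
      have := pow_eq_zero_iff hp.pos.ne' |>.mp h2
      have := sub_eq_zero.mp this
      exact this
    exact hqmin t ht0 (by nlinarith) h3
  have hdvd_of_pow : ∀ m : ℕ, γ ^ m = 1 → q ∣ m := by
    intro m h
    have h2 : γ ^ (m % q) = 1 := by
      have he : γ ^ m = (γ ^ q) ^ (m / q) * γ ^ (m % q) := by
        rw [← pow_mul, ← pow_add, Nat.div_add_mod]
      rw [hγq, one_pow, one_mul] at he
      rw [← he, h]
    rcases Nat.eq_zero_or_pos (m % q) with h0 | hpos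
    · exact Nat.dvd_of_mod_eq_zero h0
    · exact absurd h2 (hqmin _ hpos (Nat.mod_lt _ hq0))
  have hqdvd : ∀ N ii : ℕ, 1 ≤ ii →
      (∀ t < ii + 1, coeff t (fit g N - X) = 0) →
      coeff (ii + 1) (fit g N - X) ≠ 0 → q ∣ ii := by
    intro N ii h1 hlow hne
    have hkey := key_comm hg0 N h1 hlow
    rw [hg1] at hkey
    have hγi1 : γ ^ (ii + 1) = γ := by
      have := hkey.symm
      exact mul_left_cancel₀ hne (by linear_combination this)
    have hγi : γ ^ ii = 1 := by
      rw [pow_succ] at hγi1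
      have : γ ^ ii * γ = 1 * γ := by rw [hγi1, one_mul]
      exact mul_right_cancel₀ hγ0 this
    exact hdvd_of_pow ii hγi
  induction n generalizing i with
  | zero =>
      rw [show q * p ^ 0 = q by simp] at hi
      obtain ⟨hne, hlow⟩ := PowerSeries.order_eq_nat.mp hi
      have h1 : coeff 1 (fit g q - X) = 0 := by
        rw [map_sub, coeff_one_fit, hg1, hγq]
        simp
      have hi1 : 1 ≤ i := by
        by_contra hcon
        have : i = 0 := by omega
        subst this
        exact hne h1
      have hq_i : q ∣ i := hqdvd q i hi1 (fun t ht => hlow t ht) hne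
      have : q ≤ i := Nat.le_of_dvd (by omega) hq_i
      simpa using this
  | succ n ih =>
      set F := fit g (q * p ^ n) with hF
      have hsplit : fit g (q * p ^ (n + 1)) = fit F p := by
        rw [hF, ← fit_mul hg0, show q * p ^ n * p = q * p ^ (n + 1) by ring]
      have hF0 : constantCoeff F = 0 := constantCoeff_fit hg0 _
      by_cases hFX : F = X
      · exfalso
        rw [hsplit, hFX, fit_X, sub_self] at hi
        rw [PowerSeries.order_zero] at hi
        exact (WithTop.top_ne_coe (a := (i+1:ℕ))) hi
      · have hFne : F - X ≠ 0 := sub_ne_zero.mpr hFX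
        have hfin : order (F - X) ≠ ⊤ := fun h => hFne (PowerSeries.order_eq_top.mp h)
        obtain ⟨m, hm⟩ := WithTop.ne_top_iff_exists.mp hfin
        obtain ⟨hmne, hmlow⟩ := PowerSeries.order_eq_nat.mp hm.symm
        have h0 : coeff 0 (F - X) = 0 := by
          rw [map_sub, PowerSeries.coeff_zero_eq_constantCoeff, hF0]
          simp
        have h1 : coeff 1 (F - X) = 0 := by
          rw [map_sub, hF, coeff_one_fit, hg1, pow_mul, hγq, one_pow]
          simp
        have hm2 : 2 ≤ m := by
          have hm0 : m ≠ 0 := fun h => hmne (h ▸ h0)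
          have hm1 : m ≠ 1 := fun h => hmne (h ▸ h1)
          omega
        set b := m - 1 with hb
        have hmb : m = b + 1 := by omega
        have hb1 : 1 ≤ b := by omega
        have ihb : q * ∑ j ∈ Finset.range (n + 1), p ^ j ≤ b := by
          refine ih b ?_
          rw [← hm, hmb]
          rfl
        have hqb : q ∣ b := by
          have h1' : ∀ t < b + 1, coeff t (fit g (q * p ^ n) - X) = 0 := by
            rw [← hF]
            intro t ht
            exact hmlow t (by omega)
          have h2' : coeff (b + 1) (fit g (q * p ^ n) - X) ≠ 0 := by
            rw [← hF, ← hmb]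
            exact hmne
          exact hqdvd _ b hb1 h1' h2'
        -- main estimates
        have hXu : X + (F - X) = F := by ring
        obtain ⟨hest, hstrict⟩ := main_est hp (u := F - X) (e := m) hm2 hmlow
        rw [hXu] at hest hstrict
        have hgoalOrd : order (fit F p - X) = ((i + 1 : ℕ) : ℕ∞) := by
          rw [← hsplit]; exact hi
        obtain ⟨hine, hilow⟩ := PowerSeries.order_eq_nat.mp hgoalOrd
        have hkeyidx : m + (p - 1) * (m - 1) = p * b + 1 := by
          have h2 : p * b = (p - 1) * b + b := by
            conv_lhs => rw [show p = (p - 1) + 1 by omega]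
            ring
          have h3 : m - 1 = b := hb.symm
          rw [h3]
          omega
        have hlb : p * b + 1 ≤ i + 1 := by
          by_contra hcon
          exact hine (hest _ (by omega))
        have hi1 : 1 ≤ i := by nlinarith
        have hqi : q ∣ i := by
          refine hqdvd (q * p ^ (n + 1)) i hi1 (fun t ht => ?_) ?_
          · rw [hsplit]; exact hilow t ht
          · rw [hsplit]; exact hine
        set S := ∑ j ∈ Finset.range (n + 1), p ^ j with hS
        have hSn1 : ∑ j ∈ Finset.range (n + 2), p ^ j = S * p + 1 := by
          rw [Finset.sum_range_succ' (fun j => p ^ j) (n + 1)]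
          simp [pow_succ, Finset.sum_mul, hS]
        rw [hSn1]
        have hSmod : ¬ p ∣ S := by
          intro hdvd
          have : ∃ T, S = p * T + 1 := by
            refine ⟨∑ j ∈ Finset.range n, p ^ j, ?_⟩
            rw [hS, Finset.sum_range_succ' (fun j => p ^ j) n]
            simp [pow_succ, Finset.sum_mul, Finset.mul_sum]
            ring
          obtain ⟨T, hT⟩ := this
          rw [hT] at hdvd
          have h1 : p ∣ 1 := by
            have h2 := Nat.dvd_sub hdvd (Dvd.intro T rfl)
            simpa using h2
          have := Nat.le_of_dvd one_pos h1
          omega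
        by_cases hbeq : b = q * S
        · -- tight case
          have hpb : ¬ p ∣ b := by
            rw [hbeq]
            intro hdvd
            rcases (Nat.Prime.dvd_mul hp).mp hdvd with h | h
            · exact hpq h
            · exact hSmod h
          have hstrict' := hstrict hpb  -- uses m - 1 = b... check: p ∣ (m-1) ↔ p ∣ b
          have hcoeffzero : coeff (p * b + 1) (fit F p - X) = 0 := by
            rw [← hkeyidx]
            exact hstrict'
          have hne2 : i + 1 ≠ p * b + 1 := fun h => hine (h ▸ hcoeffzero)
          have hilb : p * b + 1 ≤ i := by omega
          obtain ⟨w, hw⟩ := hqi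
          have hwgt : p * S < w := by
            have h3 : q * (p * S) < q * w := by
              rw [← hw]
              calc q * (p * S) = p * (q * S) := by ring
                _ = p * b := by rw [hbeq]
                _ < i := by omega
            exact Nat.lt_of_mul_lt_mul_left h3
          calc q * (S * p + 1) = q * (p * S + 1) := by ring
            _ ≤ q * w := Nat.mul_le_mul_left q (by omega)
            _ = i := hw.symm
        · -- loose case
          have hble : q * (S + 1) ≤ b := by
            obtain ⟨w, hw⟩ := hqb
            have hwge : S ≤ w := by
              have : q * S ≤ q * w := by rw [← hw]; exact ihb
              exact Nat.le_of_mul_le_mul_left this hq0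
            have hwne : w ≠ S := by
              intro h
              exact hbeq (by rw [hw, h])
            rw [hw]
            exact Nat.mul_le_mul_left q (by omega)
          calc q * (S * p + 1) = q * S * p + q := by ring
            _ ≤ q * S * p + q * p := by
                have : q ≤ q * p := Nat.le_mul_of_pos_right q hp.pos
                omega
            _ = (q * (S + 1)) * p := by ring
            _ ≤ b * p := Nat.mul_le_mul_right p hble
            _ = p * b := by ring
            _ ≤ i := by omega
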